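/- Let A be an additive basis of order h and X a finite nonempty subset of A all of whose elements are nonnegative, and suppose 0 ∈ A \ X. Set μ := diam(X ∪ {0}). Then (A \ X) ∪ {1} is an additive basis of order at most hμ. -/

import Mathlib

open Pointwise

/-- The `h`-fold sumset of a set `S` of integers:
sums of `h` elements of `S` (with repetitions); `0`-fold sumset is `{0}`. -/
def foldSum (h : ℕ) (S : Set ℤ) : Set ℤ :=
  {z : ℤ | ∃ f : Fin h → ℤ, (∀ i, f i ∈ S) ∧ ∑ i, f i = z}

/-- Every sufficiently large integer is a sum of `h` elements of `A`. -/
def RepBy (A : Set ℤ) (h : ℕ) : Prop :=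
  ∀ᶠ N : ℤ in Filter.atTop, N ∈ foldSum h A

/-- `A ⊆ ℤ` is an additive basis: it has only finitely many negative elements and
there is `h ≥ 1` such that every sufficiently large positive integer is a
sum of `h` elements of `A`. -/
def IsAdditiveBasis (A : Set ℤ) : Prop :=
  {n : ℤ | n ∈ A ∧ n < 0}.Finite ∧ ∃ h : ℕ, 1 ≤ h ∧ RepBy A h

/-- The order `G(A)` of an additive basis: the least `h ≥ 1` such that every
sufficiently large positive integer is a sum of `h` elements of `A`. -/
noncomputable def basisOrder (A : Set ℤ) : ℕ :=
  sInf {h : ℕ | 1 ≤ h ∧ RepBy A h}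

/-- The diameter of a finite set of integers: `max {|x - y| : x, y ∈ X}` (as a natural number). -/
def diamN (X : Finset ℤ) : ℕ :=
  (X ×ˢ X).sup fun p => (p.1 - p.2).natAbs

/-- `δ(X) := gcd {x - y : x, y ∈ X}`, with the convention `δ(X) = 1` when `|X| = 1`. -/
def deltaN (X : Finset ℤ) : ℕ :=
  if 2 ≤ X.card then (X ×ˢ X).gcd (fun p => (p.1 - p.2).natAbs) else 1

lemma mem_foldSum_one {S : Set ℤ} {b : ℤ} (hb : b ∈ S) : b ∈ foldSum 1 S :=
  ⟨fun _ => b, fun _ => hb, by simp⟩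

lemma zero_mem_foldSum {S : Set ℤ} (h0 : (0 : ℤ) ∈ S) (k : ℕ) : (0 : ℤ) ∈ foldSum k S :=
  ⟨fun _ => 0, fun _ => h0, by simp⟩

lemma foldSum_add_mem {S : Set ℤ} {m n : ℕ} {z w : ℤ}
    (hz : z ∈ foldSum m S) (hw : w ∈ foldSum n S) : z + w ∈ foldSum (m + n) S := by
  obtain ⟨f, hf, hfs⟩ := hz
  obtain ⟨g, hg, hgs⟩ := hw
  refine ⟨Fin.append f g, ?_, ?_⟩
  · intro i
    refine Fin.addCases (fun j => ?_) (fun j => ?_) i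
    · simpa [Fin.append_left] using hf j
    · simpa [Fin.append_right] using hg j
  · rw [Fin.sum_univ_add]
    simp [Fin.append_left, Fin.append_right, hfs, hgs]

lemma nat_mem_foldSum {S : Set ℤ} (h0 : (0 : ℤ) ∈ S) (h1 : (1 : ℤ) ∈ S) :
    ∀ (μ n : ℕ), n ≤ μ → (n : ℤ) ∈ foldSum μ S := by
  intro μ
  induction μ with
  | zero => intro n hn; interval_cases n; exact zero_mem_foldSum h0 0
  | succ μ ih =>
    intro n hn
    cases n with
    | zero => exact zero_mem_foldSum h0 _
    | succ m =>
      have hm : m ≤ μ := Nat.succ_le_succ_iff.mp hn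
      have := foldSum_add_mem (ih m hm) (mem_foldSum_one h1)
      simpa using this

lemma mem_foldSum_of_mem {S : Set ℤ} {b : ℤ} (hb : b ∈ S) (h0 : (0 : ℤ) ∈ S)
    {k : ℕ} (hk : 1 ≤ k) : b ∈ foldSum k S := by
  obtain ⟨k', rfl⟩ := Nat.exists_eq_add_of_le hk
  have := foldSum_add_mem (mem_foldSum_one hb) (zero_mem_foldSum h0 k')
  simpa using this

lemma sum_mem_foldSum {S : Set ℤ} {μ : ℕ} :
    ∀ (h : ℕ) (f : Fin h → ℤ), (∀ i, f i ∈ foldSum μ S) →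
      (∑ i, f i) ∈ foldSum (h * μ) S := by
  intro h
  induction h with
  | zero => intro f _; simp; exact ⟨fun i => i.elim0, fun i => i.elim0, by simp⟩
  | succ h ih =>
    intro f hf
    rw [Fin.sum_univ_castSucc, Nat.succ_mul]
    exact foldSum_add_mem (ih _ (fun i => hf _)) (hf (Fin.last h))

theorem basis_of_remove_nonneg_X_add_one
    (A : Set ℤ) (h : ℕ) (hA : IsAdditiveBasis A) (hordA : basisOrder A = h)
    (X : Finset ℤ) (hXne : X.Nonempty) (hXA : ↑X ⊆ A)
    (hXnonneg : ∀ x ∈ X, (0 : ℤ) ≤ x)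
    (h0 : (0 : ℤ) ∈ A \ ↑X)
    (μ : ℕ) (hμ : μ = diamN (insert 0 X)) :
    IsAdditiveBasis ((A \ ↑X) ∪ {1}) ∧ basisOrder ((A \ ↑X) ∪ {1}) ≤ h * μ := by
  set B : Set ℤ := (A \ ↑X) ∪ {1} with hB
  obtain ⟨hAfin, h', hh'⟩ := hA
  have hmem : basisOrder A ∈ {k : ℕ | 1 ≤ k ∧ RepBy A k} := Nat.sInf_mem ⟨h', hh'⟩
  rw [hordA] at hmem
  obtain ⟨h1, hrep⟩ := hmem
  have h0B : (0 : ℤ) ∈ B := Or.inl h0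
  have h1B : (1 : ℤ) ∈ B := Or.inr rfl
  -- every element of X has natAbs ≤ μ
  have hbound : ∀ a ∈ X, a.natAbs ≤ μ := by
    intro a ha
    rw [hμ]
    have hp : (a, (0 : ℤ)) ∈ (insert 0 X) ×ˢ (insert 0 X) :=
      Finset.mem_product.mpr ⟨Finset.mem_insert_of_mem ha, Finset.mem_insert_self _ _⟩
    simpa [diamN] using Finset.le_sup (f := fun p : ℤ × ℤ => (p.1 - p.2).natAbs) hp
  have hμ1 : 1 ≤ μ := by
    obtain ⟨x, hx⟩ := hXne
    have hxne : x ≠ 0 := by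
      intro e; exact h0.2 (by simpa [← e] using hx)
    exact le_trans (Int.natAbs_pos.mpr hxne) (hbound x hx)
  -- every element of A is in foldSum μ B
  have key : ∀ a ∈ A, a ∈ foldSum μ B := by
    intro a ha
    by_cases hax : a ∈ X
    · have h0a : 0 ≤ a := hXnonneg a hax
      have := nat_mem_foldSum h0B h1B μ a.natAbs (hbound a hax)
      rwa [Int.natAbs_of_nonneg h0a] at this
    · exact mem_foldSum_of_mem (Or.inl ⟨ha, hax⟩) h0B hμ1
  have repB : RepBy B (h * μ) := by
    refine hrep.mono fun N hN => ?_
    obtain ⟨f, hf, hsum⟩ := hN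
    rw [← hsum]
    exact sum_mem_foldSum h f (fun i => key (f i) (hf i))
  have hone : 1 ≤ h * μ := by
    calc 1 = 1 * 1 := by norm_num
    _ ≤ h * μ := Nat.mul_le_mul h1 hμ1
  refine ⟨⟨?_, h * μ, hone, repB⟩, Nat.sInf_le ⟨hone, repB⟩⟩
  refine hAfin.subset fun n hn => ?_
  obtain ⟨⟨hnA, -⟩ | hn1, hneg⟩ := hn
  · exact ⟨hnA, hneg⟩
  · simp only [Set.mem_singleton_iff] at hn1
    omega
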